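/- For real κ ≠ 0, x ∈ ℝ, and a natural number n, the n-fold κ-sum x ⊕_κ x ⊕_κ ⋯ ⊕_κ x (n copies) equals [n] ⊗_κ x, where [n] = (1/κ)·sinh(κn). -/

import Mathlib

noncomputable def ksum (κ x y : ℝ) : ℝ :=
  x * Real.sqrt (1 + κ^2 * y^2) + y * Real.sqrt (1 + κ^2 * x^2)

noncomputable def kprod (κ x y : ℝ) : ℝ :=
  (1/κ) * Real.sinh ((1/κ) * Real.arsinh (κ*x) * Real.arsinh (κ*y))

/-- `ksumIter κ n x` is the `n`-fold κ-sum `x ⊕_κ x ⊕_κ ⋯ ⊕_κ x` (`n` copies of `x`). -/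
noncomputable def ksumIter (κ : ℝ) : ℕ → ℝ → ℝ
  | 0, _ => 0
  | n + 1, x => ksum κ x (ksumIter κ n x)

lemma sqrt_one_add_sinh_sq (t : ℝ) :
    Real.sqrt (1 + Real.sinh t ^ 2) = Real.cosh t := by
  rw [← Real.cosh_sq']
  exact Real.sqrt_sq (Real.cosh_pos t).le

lemma ksumIter_eq_sinh (κ : ℝ) (hκ : κ ≠ 0) (x : ℝ) (n : ℕ) :
    ksumIter κ n x = (1/κ) * Real.sinh (n * Real.arsinh (κ * x)) := by
  induction n with
  | zero => simp [ksumIter]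
  | succ n ih =>
    have hx : κ * x = Real.sinh (Real.arsinh (κ * x)) := (Real.sinh_arsinh _).symm
    set t := Real.arsinh (κ * x) with ht
    rw [ksumIter, ih, ksum]
    have h1 : κ ^ 2 * ((1/κ) * Real.sinh (n * t)) ^ 2 = Real.sinh (n * t) ^ 2 := by
      field_simp
    have h2 : κ ^ 2 * x ^ 2 = Real.sinh t ^ 2 := by
      rw [← mul_pow, ← hx]
    rw [h1, h2, sqrt_one_add_sinh_sq, sqrt_one_add_sinh_sq]
    have hxx : x = (1/κ) * Real.sinh t := by
      field_simp [← hx]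
      linarith [hx]
    rw [hxx]
    push_cast
    rw [add_mul, one_mul, Real.sinh_add]
    ring

theorem ksumIter_eq_kprod (κ : ℝ) (hκ : κ ≠ 0) (x : ℝ) (n : ℕ) :
    ksumIter κ n x = kprod κ ((1/κ) * Real.sinh (κ * n)) x := by
  rw [ksumIter_eq_sinh κ hκ, kprod]
  have : κ * ((1/κ) * Real.sinh (κ * n)) = Real.sinh (κ * n) := by field_simp
  rw [this, Real.arsinh_sinh]
  congr 1
  field_simp
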